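/- Let (π, T) be a representation of L on a Hilbert space H. Then for every n ≥ 1, every a ∈ C₀(Δ_n) and every b ∈ C₀(X): (i) the function Lⁿ(a) : y ↦ Σ_{x∈φ⁻ⁿ(y)} ρ_n(x)a(x) belongs to C₀(X) and (T*)ⁿ π(a) Tⁿ = π(Lⁿ(a)); (ii) the function a·(b∘φⁿ) (equal to a(x)b(φⁿ(x)) on Δ_n and 0 elsewhere) belongs to C₀(Δ_n) and π(a) Tⁿ π(b) = π(a·(b∘φⁿ)) Tⁿ. -/

import Mathlib

open scoped ZeroAtInfty

noncomputable section

variable {X : Type*} [TopologicalSpace X]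

/-- The fibre of `φ : Δ → X` over `y`. -/
def Fiber (Δ : Set X) (φ : X → X) (y : X) : Set X := {x | x ∈ Δ ∧ φ x = y}

/-- `ρ : Δ → [0,∞)` is a potential with bound `M`: it is nonnegative on `Δ`, the sums
`Σ_{x ∈ φ⁻¹(y)} ρ(x)` are (summable and) bounded by `M`, and for every `a ∈ C₀(Δ)` the
function `L(a)(y) = Σ_{x ∈ φ⁻¹(y)} ρ(x) a(x)` belongs to `C₀(X)`. -/
def IsPotential (Δ : Set X) (φ : X → X) (ρ : X → ℝ) (M : ℝ) : Prop :=
  (∀ x ∈ Δ, 0 ≤ ρ x) ∧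
  (∀ y : X, Summable fun x : Fiber Δ φ y => ρ x.1) ∧
  (∀ y : X, (∑' x : Fiber Δ φ y, ρ x.1) ≤ M) ∧
  ∀ a : C₀(X, ℂ), (∀ x ∉ Δ, a x = 0) →
    ∃ b : C₀(X, ℂ), ∀ y : X, b y = ∑' x : Fiber Δ φ y, (ρ x.1 : ℂ) * a x.1

/-- `Δ_pos`: the set of points of `Δ` where `ρ` is strictly positive. -/
def Dpos (Δ : Set X) (ρ : X → ℝ) : Set X := {x | x ∈ Δ ∧ 0 < ρ x}

/-- `Δ_reg`: the set of points of `Δ_pos` where `ρ` (as a function on `Δ`) is continuous. -/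
def Dreg (Δ : Set X) (ρ : X → ℝ) : Set X :=
  {x | x ∈ Δ ∧ 0 < ρ x ∧ ContinuousWithinAt ρ Δ x}

/-- A representation `(π, T)` of the transfer operator `L` determined by `(Δ, φ, ρ)`:
`π` is a nondegenerate *-representation of `C₀(X)` and `T` satisfies
`π(L(a)) = T* π(a) T` for all `a ∈ C₀(Δ)`. -/
def IsRep (Δ : Set X) (φ : X → X) (ρ : X → ℝ) {H : Type*} [NormedAddCommGroup H]
    [InnerProductSpace ℂ H] [CompleteSpace H]
    (π : C₀(X, ℂ) →⋆ₙₐ[ℂ] (H →L[ℂ] H)) (T : H →L[ℂ] H) : Prop :=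
  Dense (↑(Submodule.span ℂ {v : H | ∃ (a : C₀(X, ℂ)) (h : H), π a h = v}) : Set H) ∧
  ∀ a b : C₀(X, ℂ), (∀ x ∉ Δ, a x = 0) →
    (∀ y : X, b y = ∑' x : Fiber Δ φ y, (ρ x.1 : ℂ) * a x.1) →
    π b = star T * π a * T

/-- `Δ_n`: the natural domain of `φⁿ`. -/
def Dn (Δ : Set X) (φ : X → X) (n : ℕ) : Set X := {x | ∀ k < n, φ^[k] x ∈ Δ}

/-- `ρ_n(x) = Π_{i=0}^{n-1} ρ(φⁱ(x))`, the cocycle generated by `ρ`. -/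
def rhon (φ : X → X) (ρ : X → ℝ) (n : ℕ) (x : X) : ℝ :=
  ∏ i ∈ Finset.range n, ρ (φ^[i] x)

/-- The fibre of `φⁿ` over `y`. -/
def Fibern (Δ : Set X) (φ : X → X) (n : ℕ) (y : X) : Set X :=
  {x | x ∈ Dn Δ φ n ∧ φ^[n] x = y}

section Aux

set_option linter.unusedSectionVars false

variable {Δ : Set X} {φ : X → X} {ρ : X → ℝ}

lemma mem_dn_succ {n : ℕ} {x : X} :
    x ∈ Dn Δ φ (n + 1) ↔ x ∈ Δ ∧ φ x ∈ Dn Δ φ n := by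
  constructor
  · intro h
    refine ⟨h 0 (Nat.succ_pos n), fun k hk => ?_⟩
    have := h (k + 1) (Nat.succ_lt_succ hk)
    rwa [Function.iterate_succ_apply] at this
  · rintro ⟨h0, h1⟩ k hk
    cases k with
    | zero => exact h0
    | succ k =>
      rw [Function.iterate_succ_apply]
      exact h1 k (Nat.lt_of_succ_lt_succ hk)

lemma dn_zero : Dn Δ φ 0 = Set.univ := by
  ext x; simp [Dn]

lemma dn_subset {n : ℕ} : Dn Δ φ (n + 1) ⊆ Δ := fun _ h => (mem_dn_succ.mp h).1

lemma dn_open (hΔ : IsOpen Δ) (hφ : ContinuousOn φ Δ) (n : ℕ) : IsOpen (Dn Δ φ n) := by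
  induction n with
  | zero => rw [dn_zero]; exact isOpen_univ
  | succ n ih =>
    have : Dn Δ φ (n + 1) = Δ ∩ φ ⁻¹' (Dn Δ φ n) := by
      ext x; exact mem_dn_succ
    rw [this]
    exact hφ.isOpen_inter_preimage hΔ ih

lemma iterate_continuousOn (hφ : ContinuousOn φ Δ) (n : ℕ) :
    ContinuousOn (φ^[n]) (Dn Δ φ n) := by
  induction n with
  | zero => simpa using continuousOn_id
  | succ n ih =>
    rw [Function.iterate_succ]
    exact ih.comp (hφ.mono dn_subset) (fun x hx => (mem_dn_succ.mp hx).2)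

lemma rhon_nonneg (hρ : ∀ x ∈ Δ, 0 ≤ ρ x) {n : ℕ} {x : X} (hx : x ∈ Dn Δ φ n) :
    0 ≤ rhon φ ρ n x :=
  Finset.prod_nonneg fun i hi => hρ _ (hx i (Finset.mem_range.mp hi))

lemma rhon_succ (n : ℕ) (x : X) :
    rhon φ ρ (n + 1) x = ρ x * rhon φ ρ n (φ x) := by
  rw [rhon, Finset.prod_range_succ']
  simp only [Function.iterate_succ_apply, Function.iterate_zero_apply]
  rw [mul_comm]
  rfl

/-- The fibre of `φ^[n+1]` over `y` decomposes as a sigma-type over the fibre of `φ^[n]`. -/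
def fiberEquiv (Δ : Set X) (φ : X → X) (n : ℕ) (y : X) :
    (Σ x : Fibern Δ φ n y, Fiber Δ φ x.1) ≃ Fibern Δ φ (n + 1) y where
  toFun p := ⟨p.2.1, by
    have hz : p.2.1 ∈ Δ ∧ φ p.2.1 = p.1.1 := p.2.2
    have hx : p.1.1 ∈ Dn Δ φ n ∧ φ^[n] p.1.1 = y := p.1.2
    refine ⟨mem_dn_succ.mpr ⟨hz.1, by rw [hz.2]; exact hx.1⟩, ?_⟩
    rw [Function.iterate_succ_apply, hz.2, hx.2]⟩
  invFun w := ⟨⟨φ w.1, ⟨(mem_dn_succ.mp w.2.1).2, by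
      rw [← Function.iterate_succ_apply, w.2.2]⟩⟩, ⟨w.1, ⟨(mem_dn_succ.mp w.2.1).1, rfl⟩⟩⟩
  left_inv p := by
    obtain ⟨⟨x, hx⟩, ⟨z, hz⟩⟩ := p
    have : φ z = x := hz.2
    subst this
    rfl
  right_inv w := rfl

end Aux

section Aux2

set_option linter.unusedSectionVars false

variable {Δ : Set X} {φ : X → X} {ρ : X → ℝ} {M : ℝ}

lemma fibern_zero (y : X) : Fibern Δ φ 0 y = {y} := by
  ext x; simp [Fibern, dn_zero, Dn]

lemma norm_apply_le (a : C₀(X, ℂ)) (x : X) : ‖a x‖ ≤ ‖a‖ := by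
  rw [← ZeroAtInftyContinuousMap.norm_toBCF_eq_norm]
  exact a.toBCF.norm_coe_le_norm x

lemma summable_rhon (hρ : ∀ x ∈ Δ, 0 ≤ ρ x)
    (hsum : ∀ y : X, Summable fun x : Fiber Δ φ y => ρ x.1)
    (hM : ∀ y : X, (∑' x : Fiber Δ φ y, ρ x.1) ≤ M) :
    ∀ (n : ℕ) (y : X), Summable fun x : Fibern Δ φ n y => rhon φ ρ n x.1 := by
  intro n
  induction n with
  | zero =>
    intro y
    have hf : (Fibern Δ φ 0 y).Finite := by
      rw [fibern_zero]; exact Set.finite_singleton y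
    haveI := hf.to_subtype
    exact .of_finite
  | succ n ih =>
    intro y
    rw [← (fiberEquiv Δ φ n y).summable_iff]
    have hinner : ∀ x : Fibern Δ φ n y,
        Summable fun z : Fiber Δ φ x.1 => rhon φ ρ (n + 1) z.1 := by
      intro x
      refine ((hsum x.1).mul_right (rhon φ ρ n x.1)).congr fun z => ?_
      rw [rhon_succ]
      have hz : φ z.1 = x.1 := z.2.2
      rw [hz]
    refine (summable_sigma_of_nonneg ?_).mpr ⟨fun x => hinner x, ?_⟩
    · intro p
      exact rhon_nonneg hρ ((fiberEquiv Δ φ n y) p).2.1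
    · refine Summable.of_nonneg_of_le (fun x => tsum_nonneg fun z => ?_) (fun x => ?_)
        ((ih y).mul_left M)
      · exact rhon_nonneg hρ ((fiberEquiv Δ φ n y) ⟨x, z⟩).2.1
      · have h1 : ∀ z : Fiber Δ φ x.1,
            rhon φ ρ (n + 1) z.1 = ρ z.1 * rhon φ ρ n x.1 := by
          intro z
          rw [rhon_succ]
          have hz : φ z.1 = x.1 := z.2.2
          rw [hz]
        calc (∑' z : Fiber Δ φ x.1,
                rhon φ ρ (n + 1) ((fiberEquiv Δ φ n y) ⟨x, z⟩).1)
            = ∑' z : Fiber Δ φ x.1, ρ z.1 * rhon φ ρ n x.1 := tsum_congr h1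
          _ = (∑' z : Fiber Δ φ x.1, ρ z.1) * rhon φ ρ n x.1 := tsum_mul_right
          _ ≤ M * rhon φ ρ n x.1 := by
              exact mul_le_mul_of_nonneg_right (hM x.1) (rhon_nonneg hρ x.2.1)

lemma summable_rhon_mul (hρ : ∀ x ∈ Δ, 0 ≤ ρ x)
    (hsum : ∀ y : X, Summable fun x : Fiber Δ φ y => ρ x.1)
    (hM : ∀ y : X, (∑' x : Fiber Δ φ y, ρ x.1) ≤ M)
    (n : ℕ) (y : X) (a : C₀(X, ℂ)) :
    Summable fun x : Fibern Δ φ n y => (rhon φ ρ n x.1 : ℂ) * a x.1 := by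
  apply Summable.of_norm
  refine Summable.of_nonneg_of_le (fun x => norm_nonneg _) (fun x => ?_)
    (((summable_rhon hρ hsum hM) n y).mul_right ‖a‖)
  rw [norm_mul, Complex.norm_real, Real.norm_eq_abs,
    abs_of_nonneg (rhon_nonneg hρ x.2.1)]
  exact mul_le_mul_of_nonneg_left (norm_apply_le a x.1) (rhon_nonneg hρ x.2.1)

lemma tsum_step (hρ : ∀ x ∈ Δ, 0 ≤ ρ x)
    (hsum : ∀ y : X, Summable fun x : Fiber Δ φ y => ρ x.1)
    (hM : ∀ y : X, (∑' x : Fiber Δ φ y, ρ x.1) ≤ M)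
    (n : ℕ) (y : X) (a La₁ : C₀(X, ℂ))
    (hLa₁ : ∀ x : X, La₁ x = ∑' z : Fiber Δ φ x, (ρ z.1 : ℂ) * a z.1) :
    ∑' x : Fibern Δ φ n y, (rhon φ ρ n x.1 : ℂ) * La₁ x.1
      = ∑' w : Fibern Δ φ (n + 1) y, (rhon φ ρ (n + 1) w.1 : ℂ) * a w.1 := by
  set e := fiberEquiv Δ φ n y with he
  have hsummable : Summable fun p : (Σ x : Fibern Δ φ n y, Fiber Δ φ x.1) =>
      (rhon φ ρ (n + 1) (e p).1 : ℂ) * a (e p).1 :=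
    (e.summable_iff).mpr (summable_rhon_mul hρ hsum hM (n + 1) y a)
  calc ∑' x : Fibern Δ φ n y, (rhon φ ρ n x.1 : ℂ) * La₁ x.1
      = ∑' x : Fibern Δ φ n y, ∑' z : Fiber Δ φ x.1,
          (rhon φ ρ (n + 1) (e ⟨x, z⟩).1 : ℂ) * a (e ⟨x, z⟩).1 := by
        refine tsum_congr fun x => ?_
        rw [hLa₁, ← tsum_mul_left]
        refine tsum_congr fun z => ?_
        have h1 : (e ⟨x, z⟩).1 = z.1 := rfl
        rw [h1, rhon_succ]
        have hz : φ z.1 = x.1 := z.2.2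
        rw [hz]
        push_cast
        ring
    _ = ∑' p : (Σ x : Fibern Δ φ n y, Fiber Δ φ x.1),
          (rhon φ ρ (n + 1) (e p).1 : ℂ) * a (e p).1 := (Summable.tsum_sigma hsummable).symm
    _ = ∑' w : Fibern Δ φ (n + 1) y, (rhon φ ρ (n + 1) w.1 : ℂ) * a w.1 :=
        e.tsum_eq (fun w : Fibern Δ φ (n + 1) y => (rhon φ ρ (n + 1) w.1 : ℂ) * a w.1)

end Aux2

section Aux3

set_option linter.unusedSectionVars false

variable {Δ : Set X} {φ : X → X} {ρ : X → ℝ} {M : ℝ}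

lemma exists_c (hΔ : IsOpen Δ) (hφ : ContinuousOn φ Δ) (n : ℕ)
    (a b : C₀(X, ℂ)) (ha : ∀ x ∉ Dn Δ φ n, a x = 0) :
    ∃ c : C₀(X, ℂ), (∀ x ∈ Dn Δ φ n, c x = a x * b (φ^[n] x)) ∧
      (∀ x ∉ Dn Δ φ n, c x = 0) := by
  set U := Dn Δ φ n with hUdef
  have hU : IsOpen U := dn_open hΔ hφ n
  set ψ : X → ℂ := U.indicator (fun x => b (φ^[n] x)) with hψ
  set g : X → ℂ := fun x => a x * ψ x with hg
  have hbound : ∀ x : X, ‖g x‖ ≤ ‖b‖ * ‖a x‖ := by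
    intro x
    by_cases hx : x ∈ U
    · have h1 : ψ x = b (φ^[n] x) := Set.indicator_of_mem hx _
      rw [hg]
      simp only []
      rw [h1, norm_mul, mul_comm]
      exact mul_le_mul_of_nonneg_right (norm_apply_le b _) (norm_nonneg _)
    · have h1 : ψ x = 0 := Set.indicator_of_notMem hx _
      rw [hg]
      simp only []
      rw [h1, mul_zero, norm_zero]
      positivity
  have hcont : Continuous g := by
    rw [continuous_iff_continuousAt]
    intro x
    by_cases hx : x ∈ U
    · have h1 : ContinuousOn (fun x => a x * b (φ^[n] x)) U :=
        (a.continuous.continuousOn).mul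
          (b.continuous.comp_continuousOn (iterate_continuousOn hφ n))
      have hco : ContinuousOn g U :=
        h1.congr (fun z hz => by simp [hg, hψ, Set.indicator_of_mem hz])
      exact hco.continuousAt (hU.mem_nhds hx)
    · have hx0 : g x = 0 := by simp [hg, ha x hx]
      rw [ContinuousAt, hx0]
      apply squeeze_zero_norm hbound
      have h2 : Filter.Tendsto (fun y => ‖b‖ * ‖a y‖) (nhds x)
          (nhds (‖b‖ * ‖a x‖)) :=
        (continuous_const.mul a.continuous.norm).tendsto x
      rwa [ha x hx, norm_zero, mul_zero] at h2
  have hzero : Filter.Tendsto g (Filter.cocompact X) (nhds 0) := by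
    apply squeeze_zero_norm hbound
    have h2 : Filter.Tendsto (fun y => ‖a y‖) (Filter.cocompact X) (nhds ‖(0 : ℂ)‖) :=
      (continuous_norm.tendsto (0 : ℂ)).comp (zero_at_infty a)
    rw [norm_zero] at h2
    have h3 := h2.const_mul ‖b‖
    rwa [mul_zero] at h3
  refine ⟨⟨⟨g, hcont⟩, hzero⟩, fun x hx => ?_, fun x hx => ?_⟩
  · show g x = _
    rw [hg]
    simp only []
    rw [hψ, Set.indicator_of_mem hx]
  · show g x = 0
    rw [hg]
    simp only []
    rw [ha x hx, zero_mul]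

variable {H : Type*} [NormedAddCommGroup H] [InnerProductSpace ℂ H] [CompleteSpace H]

lemma masterI {Δ : Set X} {φ : X → X} {ρ : X → ℝ} {M : ℝ} (hpot : IsPotential Δ φ ρ M)
    (π : C₀(X, ℂ) →⋆ₙₐ[ℂ] (H →L[ℂ] H)) (T : H →L[ℂ] H)
    (hrep : IsRep Δ φ ρ π T) :
    ∀ (n : ℕ) (a : C₀(X, ℂ)), (∀ x ∉ Dn Δ φ n, a x = 0) →
      ∃ La : C₀(X, ℂ),
        (∀ y : X, La y = ∑' x : Fibern Δ φ n y, (rhon φ ρ n x.1 : ℂ) * a x.1) ∧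
        (star T) ^ n * π a * T ^ n = π La := by
  obtain ⟨hρ, hsum, hM, hL⟩ := hpot
  intro n
  induction n with
  | zero =>
    intro a _
    refine ⟨a, fun y => ?_, by simp⟩
    have h0 : Fibern Δ φ 0 y = ({y} : Set X) := fibern_zero y
    calc a y = ∑' x : ({y} : Set X), a x.1 := (tsum_singleton y (fun x => a x)).symm
      _ = ∑' x : Fibern Δ φ 0 y, a x.1 := by rw [h0]
      _ = ∑' x : Fibern Δ φ 0 y, (rhon φ ρ 0 x.1 : ℂ) * a x.1 :=
          tsum_congr fun x => by simp [rhon]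
  | succ n ih =>
    intro a ha
    have haΔ : ∀ x ∉ Δ, a x = 0 := fun x hx => ha x (fun hmem => hx (dn_subset hmem))
    obtain ⟨La₁, hLa₁⟩ := hL a haΔ
    have hLa₁rel : π La₁ = star T * π a * T := hrep.2 a La₁ haΔ hLa₁
    have hLa₁supp : ∀ x ∉ Dn Δ φ n, La₁ x = 0 := by
      intro x hx
      rw [hLa₁]
      have hz : ∀ z : Fiber Δ φ x, (ρ z.1 : ℂ) * a z.1 = 0 := by
        intro z
        have hnot : z.1 ∉ Dn Δ φ (n + 1) := by
          intro hmem
          have h2 := (mem_dn_succ.mp hmem).2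
          rw [z.2.2] at h2
          exact hx h2
        rw [ha z.1 hnot, mul_zero]
      rw [tsum_congr hz, tsum_zero]
    obtain ⟨La, hLaf, hLarel⟩ := ih La₁ hLa₁supp
    refine ⟨La, fun y => ?_, ?_⟩
    · rw [hLaf y]
      exact tsum_step hρ hsum hM n y a La₁ hLa₁
    · rw [pow_succ (star T) n, pow_succ' T n, ← hLarel, hLa₁rel]
      simp only [mul_assoc]

end Aux3

section Aux4

set_option linter.unusedSectionVars false

open ZeroAtInftyContinuousMap in
lemma masterII {Δ : Set X} {φ : X → X} {ρ : X → ℝ} {M : ℝ}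
    {H : Type*} [NormedAddCommGroup H] [InnerProductSpace ℂ H] [CompleteSpace H]
    (hΔ : IsOpen Δ) (hφ : ContinuousOn φ Δ) (hpot : IsPotential Δ φ ρ M)
    (π : C₀(X, ℂ) →⋆ₙₐ[ℂ] (H →L[ℂ] H)) (T : H →L[ℂ] H) (hrep : IsRep Δ φ ρ π T)
    (n : ℕ) (a : C₀(X, ℂ)) (ha : ∀ x ∉ Dn Δ φ n, a x = 0) (b : C₀(X, ℂ)) :
    ∃ c : C₀(X, ℂ), (∀ x ∈ Dn Δ φ n, c x = a x * b (φ^[n] x)) ∧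
      (∀ x ∉ Dn Δ φ n, c x = 0) ∧ π a * T ^ n * π b = π c * T ^ n := by
  obtain ⟨c, hc1, hc2⟩ := exists_c hΔ hφ n a b ha
  refine ⟨c, hc1, hc2, ?_⟩
  have hda : ∀ x ∉ Dn Δ φ n, (star a * a) x = 0 := fun x hx => by
    simp [mul_apply, ha x hx]
  obtain ⟨Ld, hLdf, hLdrel⟩ := masterI hpot π T hrep n (star a * a) hda
  have hac : ∀ x ∉ Dn Δ φ n, (star a * c) x = 0 := fun x hx => by
    simp [mul_apply, hc2 x hx]
  obtain ⟨L₂, hL₂f, hL₂rel⟩ := masterI hpot π T hrep n (star a * c) hac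
  have hca : ∀ x ∉ Dn Δ φ n, (star c * a) x = 0 := fun x hx => by
    simp [mul_apply, ha x hx]
  obtain ⟨L₃, hL₃f, hL₃rel⟩ := masterI hpot π T hrep n (star c * a) hca
  have hcc : ∀ x ∉ Dn Δ φ n, (star c * c) x = 0 := fun x hx => by
    simp [mul_apply, hc2 x hx]
  obtain ⟨L₄, hL₄f, hL₄rel⟩ := masterI hpot π T hrep n (star c * c) hcc
  -- pointwise identities among the transferred functions
  have hL₂eq : ∀ y, L₂ y = Ld y * b y := by
    intro y
    rw [hL₂f, hLdf, ← tsum_mul_right]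
    refine tsum_congr fun x => ?_
    have hx1 : x.1 ∈ Dn Δ φ n := x.2.1
    have hx2 : φ^[n] x.1 = y := x.2.2
    simp only [mul_apply, star_apply, hc1 x.1 hx1, hx2]
    ring
  have hL₄eq : ∀ y, L₄ y = L₃ y * b y := by
    intro y
    rw [hL₄f, hL₃f, ← tsum_mul_right]
    refine tsum_congr fun x => ?_
    have hx1 : x.1 ∈ Dn Δ φ n := x.2.1
    have hx2 : φ^[n] x.1 = y := x.2.2
    simp only [mul_apply, star_apply, hc1 x.1 hx1, hx2]
    ring
  -- operator computations
  have collapse : ∀ (d Ld : C₀(X, ℂ)), ((star T) ^ n * π d * T ^ n = π Ld) →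
      ∀ S : H →L[ℂ] H, (star T) ^ n * (π d * (T ^ n * S)) = π Ld * S := by
    intro d Ld h S
    calc (star T) ^ n * (π d * (T ^ n * S)) = ((star T) ^ n * π d * T ^ n) * S := by
          simp only [mul_assoc]
      _ = π Ld * S := by rw [h]
  have collapse0 : ∀ (d Ld : C₀(X, ℂ)), ((star T) ^ n * π d * T ^ n = π Ld) →
      (star T) ^ n * (π d * T ^ n) = π Ld := fun d Ld h => by rw [← mul_assoc, h]
  set A := π a * T ^ n * π b with hA
  set B := π c * T ^ n with hB
  have merge : ∀ (p q : C₀(X, ℂ)) (S : H →L[ℂ] H),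
      π p * (π q * S) = π (p * q) * S := fun p q S => by rw [← mul_assoc, ← map_mul]
  have m1 : star A * A = π (star b * (Ld * b)) := by
    calc star A * A
        = π (star b) * ((star T) ^ n * (π (star a) * (π a * (T ^ n * π b)))) := by
          rw [hA]
          simp only [star_mul, star_pow, ← map_star, mul_assoc]
      _ = π (star b) * ((star T) ^ n * (π (star a * a) * (T ^ n * π b))) := by
          rw [merge (star a) a (T ^ n * π b)]
      _ = π (star b) * (π Ld * π b) := by rw [collapse _ _ hLdrel (π b)]
      _ = π (star b * (Ld * b)) := by rw [← map_mul, ← map_mul]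
  have m2 : star A * B = π (star b * L₂) := by
    calc star A * B
        = π (star b) * ((star T) ^ n * (π (star a) * (π c * T ^ n))) := by
          rw [hA, hB]
          simp only [star_mul, star_pow, ← map_star, mul_assoc]
      _ = π (star b) * ((star T) ^ n * (π (star a * c) * T ^ n)) := by
          rw [merge (star a) c (T ^ n)]
      _ = π (star b) * π L₂ := by rw [collapse0 _ _ hL₂rel]
      _ = π (star b * L₂) := by rw [← map_mul]
  have m3 : star B * A = π (L₃ * b) := by
    calc star B * A
        = (star T) ^ n * (π (star c) * (π a * (T ^ n * π b))) := by
          rw [hA, hB]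
          simp only [star_mul, star_pow, ← map_star, mul_assoc]
      _ = (star T) ^ n * (π (star c * a) * (T ^ n * π b)) := by
          rw [merge (star c) a (T ^ n * π b)]
      _ = π L₃ * π b := by rw [collapse _ _ hL₃rel (π b)]
      _ = π (L₃ * b) := by rw [← map_mul]
  have m4 : star B * B = π L₄ := by
    calc star B * B
        = (star T) ^ n * (π (star c) * (π c * T ^ n)) := by
          rw [hB]
          simp only [star_mul, star_pow, ← map_star, mul_assoc]
      _ = (star T) ^ n * (π (star c * c) * T ^ n) := by rw [merge (star c) c (T ^ n)]
      _ = π L₄ := by rw [collapse0 _ _ hL₄rel]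
  have hfun1 : star b * (Ld * b) = star b * L₂ := by
    ext y
    simp only [mul_apply]
    rw [hL₂eq y]
  have hfun2 : (L₄ : C₀(X, ℂ)) = L₃ * b := by
    ext y
    simp only [mul_apply]
    rw [hL₄eq y]
  have key : star (A - B) * (A - B) = 0 := by
    rw [star_sub, sub_mul, mul_sub, mul_sub, m1, m2, m3, m4, hfun1, hfun2]
    abel
  have hD : A - B = 0 := (CStarRing.star_mul_self_eq_zero_iff _).mp key
  exact sub_eq_zero.mp hD

end Aux4

/-- Iterated relations in a representation: `(T*)ⁿ π(a) Tⁿ = π(Lⁿ(a))` and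
`π(a) Tⁿ π(b) = π(a·(b∘φⁿ)) Tⁿ`. -/
theorem representation_iterated_relations
    {X : Type*} [TopologicalSpace X] [LocallyCompactSpace X] [T2Space X]
    (Δ : Set X) (φ : X → X) (ρ : X → ℝ) (M : ℝ)
    (hΔ : IsOpen Δ) (hφ : ContinuousOn φ Δ)
    (hcount : ∀ y : X, (Fiber Δ φ y).Countable)
    (hpot : IsPotential Δ φ ρ M)
    {H : Type*} [NormedAddCommGroup H] [InnerProductSpace ℂ H] [CompleteSpace H]
    (π : C₀(X, ℂ) →⋆ₙₐ[ℂ] (H →L[ℂ] H)) (T : H →L[ℂ] H)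
    (hrep : IsRep Δ φ ρ π T)
    (n : ℕ) (hn : 1 ≤ n) :
    ∀ a : C₀(X, ℂ), (∀ x ∉ Dn Δ φ n, a x = 0) →
      -- (i)
      ((∃ La : C₀(X, ℂ),
          (∀ y : X, La y = ∑' x : Fibern Δ φ n y, (rhon φ ρ n x.1 : ℂ) * a x.1) ∧
          (star T) ^ n * π a * T ^ n = π La) ∧
      -- (ii)
       (∀ b : C₀(X, ℂ), ∃ c : C₀(X, ℂ),
          (∀ x ∈ Dn Δ φ n, c x = a x * b (φ^[n] x)) ∧ (∀ x ∉ Dn Δ φ n, c x = 0) ∧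
          π a * T ^ n * π b = π c * T ^ n)) := by
  intro a ha
  exact ⟨masterI hpot π T hrep n a ha, fun b => masterII hΔ hφ hpot π T hrep n a ha b⟩
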